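/- There exists a universal constant c > 0 such that for every dimension d ≥ 1 and every ℓ > 0 there exists a map φ : ℝ^d → ℝ^d that is a (c·d^{3/2}, d+1)-hash with diameter bound ℓ; that is, every fiber φ^{−1}(z) has Euclidean diameter at most ℓ, and every set S ⊆ ℝ^d of Euclidean diameter at most ℓ/(c·d^{3/2}) satisfies |φ(S)| ≤ d + 1. -/

import Mathlib

open scoped BigOperators

noncomputable section
namespace Stmt8Aux

/-- partial sums of the staircase rounding -/
def Sg (D : ℕ) (x : ℕ → ℝ) : ℕ → ℤ
  | 0 => 0
  | n+1 => Sg D x n + ⌊x n + (Sg D x n : ℝ) / (D+1)⌋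

/-- the rounding digits -/
def kk (D : ℕ) (x : ℕ → ℝ) (n : ℕ) : ℤ := ⌊x n + (Sg D x n : ℝ) / (D+1)⌋

lemma Sg_succ (D : ℕ) (x : ℕ → ℝ) (n : ℕ) : Sg D x (n+1) = Sg D x n + kk D x n := rfl

lemma Sg_eq_sum (D : ℕ) (x : ℕ → ℝ) (n : ℕ) :
    Sg D x n = ∑ m ∈ Finset.range n, kk D x m := by
  induction n with
  | zero => rfl
  | succ n ih => rw [Sg_succ, ih, Finset.sum_range_succ]

lemma floor_step {D n : ℕ} (hn : n + 1 ≤ D) {η a b : ℝ} (hη : η < 1/(D+1))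
    (hab : |a - b| ≤ η) {s t : ℤ} (h1 : 1 ≤ s - t) (h2 : s - t ≤ (n:ℤ)) :
    ⌊b + (t:ℝ)/(D+1)⌋ ≤ ⌊a + (s:ℝ)/(D+1)⌋ ∧
    ⌊a + (s:ℝ)/(D+1)⌋ ≤ ⌊b + (t:ℝ)/(D+1)⌋ + 1 := by
  have hD : (0:ℝ) < (D:ℝ) + 1 := by positivity
  have hab' := abs_le.mp hab
  have hst1 : (1:ℝ) ≤ (s:ℝ) - t := by exact_mod_cast h1
  have hstn : (s:ℝ) - t ≤ (n:ℝ) := by exact_mod_cast h2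
  have hdiv1 : (1:ℝ)/(D+1) ≤ ((s:ℝ) - t)/(D+1) := by gcongr
  have hdiv2 : ((s:ℝ) - t)/(D+1) ≤ (n:ℝ)/(D+1) := by gcongr
  have hn' : (n:ℝ)/(D+1) + 1/(D+1) ≤ 1 := by
    rw [← add_div, div_le_one hD]
    have : (n:ℝ) + 1 ≤ (D:ℝ) := by exact_mod_cast hn
    linarith
  have hsplit : (s:ℝ)/(D+1) - (t:ℝ)/(D+1) = ((s:ℝ) - t)/(D+1) := by ring
  have hge : b + (t:ℝ)/(D+1) ≤ a + (s:ℝ)/(D+1) := by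
    have h := hab'.1
    have hηle : η ≤ 1/(D+1) := le_of_lt hη
    nlinarith [hdiv1, hsplit]
  have hlt : a + (s:ℝ)/(D+1) ≤ b + (t:ℝ)/(D+1) + 1 := by
    have h := hab'.2
    have hηle : η ≤ 1/(D+1) := le_of_lt hη
    nlinarith [hdiv2, hsplit, hn']
  refine ⟨Int.floor_mono hge, ?_⟩
  have := Int.floor_mono hlt
  simpa [Int.floor_add_one] using this

lemma kk_def (D : ℕ) (x : ℕ → ℝ) (n : ℕ) :
    kk D x n = ⌊x n + (Sg D x n : ℝ) / (D+1)⌋ := rfl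

lemma key {D : ℕ} {η : ℝ} (hη : η < 1/(D+1)) {x z : ℕ → ℝ}
    (hxz : ∀ n, |x n - z n| ≤ η) :
    ∀ n, n ≤ D →
      ((∀ m, m < n → kk D x m = kk D z m) ∧ Sg D x n = Sg D z n) ∨
      (1 ≤ |Sg D x n - Sg D z n| ∧ |Sg D x n - Sg D z n| ≤ (n:ℤ)) := by
  have hD : (0:ℝ) < (D:ℝ) + 1 := by positivity
  have hη1 : η < 1 := lt_of_lt_of_le hη (by rw [div_le_one hD]; linarith [Nat.cast_nonneg (α := ℝ) D])
  intro n
  induction n with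
  | zero => intro _; exact Or.inl ⟨fun m hm => absurd hm (Nat.not_lt_zero m), rfl⟩
  | succ n ih =>
    intro hn1
    have hn : n ≤ D := Nat.le_of_succ_le hn1
    rcases ih hn with ⟨hpre, hsg⟩ | ⟨h1, h2⟩
    · by_cases hk : kk D x n = kk D z n
      · left
        refine ⟨fun m hm => ?_, ?_⟩
        · rcases Nat.lt_succ_iff_lt_or_eq.mp hm with h | h
          exacts [hpre m h, h ▸ hk]
        · rw [Sg_succ, Sg_succ, hsg, hk]
      · right
        have habs := abs_le.mp (hxz n)
        have hle1 : kk D x n ≤ kk D z n + 1 := by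
          rw [kk_def, kk_def, hsg]
          have : x n + (Sg D z n : ℝ)/(D+1) ≤ (z n + (Sg D z n : ℝ)/(D+1)) + 1 := by
            linarith [habs.2]
          simpa [Int.floor_add_one] using Int.floor_mono this
        have hle2 : kk D z n ≤ kk D x n + 1 := by
          rw [kk_def, kk_def, hsg]
          have : z n + (Sg D z n : ℝ)/(D+1) ≤ (x n + (Sg D z n : ℝ)/(D+1)) + 1 := by
            linarith [habs.1]
          simpa [Int.floor_add_one] using Int.floor_mono this
        have hne : kk D x n - kk D z n ≠ 0 := fun h => hk (by omega)
        rw [Sg_succ, Sg_succ, hsg]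
        have hrw : Sg D z n + kk D x n - (Sg D z n + kk D z n) = kk D x n - kk D z n := by
          ring
        rw [hrw]
        push_cast
        rcases le_or_gt 0 (kk D x n - kk D z n) with hc | hc
        · rw [abs_of_nonneg hc]; omega
        · rw [abs_of_neg hc]; omega
    · right
      rcases le_or_gt 0 (Sg D x n - Sg D z n) with hm | hm
      · have hm1 : 1 ≤ Sg D x n - Sg D z n := by rwa [abs_of_nonneg hm] at h1
        have hm2 : Sg D x n - Sg D z n ≤ (n:ℤ) := by
          rwa [abs_of_nonneg hm] at h2
        obtain ⟨hf1, hf2⟩ := floor_step hn1 hη (hxz n) hm1 hm2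
        rw [Sg_succ, Sg_succ, kk_def, kk_def]
        rw [abs_of_nonneg (by omega : (0:ℤ) ≤ Sg D x n + ⌊x n + (Sg D x n : ℝ)/(D+1)⌋ - (Sg D z n + ⌊z n + (Sg D z n : ℝ)/(D+1)⌋))]
        push_cast
        omega
      · have hm1 : 1 ≤ Sg D z n - Sg D x n := by
          rw [abs_sub_comm, abs_of_nonneg (by omega)] at h1; exact h1
        have hm2 : Sg D z n - Sg D x n ≤ (n:ℤ) := by
          rw [abs_sub_comm] at h2
          rwa [abs_of_nonneg (by omega)] at h2
        have hzx : |z n - x n| ≤ η := by rw [abs_sub_comm]; exact hxz n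
        obtain ⟨hf1, hf2⟩ := floor_step hn1 hη hzx hm1 hm2
        rw [Sg_succ, Sg_succ, kk_def, kk_def]
        rw [abs_sub_comm,
          abs_of_nonneg (by omega : (0:ℤ) ≤ Sg D z n + ⌊z n + (Sg D z n : ℝ)/(D+1)⌋ - (Sg D x n + ⌊x n + (Sg D x n : ℝ)/(D+1)⌋))]
        push_cast
        omega

lemma Sg_eq_of_prefix {D : ℕ} {x z : ℕ → ℝ} (n : ℕ)
    (h : ∀ m, m < n → kk D x m = kk D z m) : Sg D x n = Sg D z n := by
  rw [Sg_eq_sum, Sg_eq_sum]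
  exact Finset.sum_congr rfl fun m hm => h m (Finset.mem_range.mp hm)

lemma abs_lt_one_of_floor_eq {u v : ℝ} (h : ⌊u⌋ = ⌊v⌋) : |u - v| < 1 := by
  have h1 := Int.floor_le u
  have h2 := Int.lt_floor_add_one u
  have h3 := Int.floor_le v
  have h4 := Int.lt_floor_add_one v
  rw [h] at h1 h2
  rw [abs_lt]
  constructor <;> linarith

end Stmt8Aux

end

open Stmt8Aux

/-- There is a universal constant `c > 0` such that for every
`d ≥ 1` and every `ℓ > 0` there is a `(c·d^{3/2}, d+1)`-hash `φ : ℝ^d → ℝ^d`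
with diameter bound `ℓ`: every fiber of `φ` has Euclidean diameter at most `ℓ`,
and every `S ⊆ ℝ^d` of Euclidean diameter at most `ℓ / (c·d^{3/2})` has image
`φ(S)` of at most `d + 1` elements. -/
theorem stmt_8 :
    ∃ c : ℝ, 0 < c ∧
      ∀ (d : ℕ), 1 ≤ d → ∀ ℓ : ℝ, 0 < ℓ →
        ∃ φ : EuclideanSpace ℝ (Fin d) → EuclideanSpace ℝ (Fin d),
          (∀ z ∈ Set.range φ, EMetric.diam (φ ⁻¹' {z}) ≤ ENNReal.ofReal ℓ) ∧
          ∀ S : Set (EuclideanSpace ℝ (Fin d)),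
            EMetric.diam S ≤ ENNReal.ofReal (ℓ / (c * (d : ℝ) ^ ((3 : ℝ) / 2))) →
            (φ '' S).Finite ∧ (φ '' S).ncard ≤ d + 1 := by
  refine ⟨8, by norm_num, fun d hd ℓ hℓ => ?_⟩
  have hd0 : (0:ℝ) < d := by exact_mod_cast hd
  have hsq : (0:ℝ) < Real.sqrt d := Real.sqrt_pos.mpr hd0
  set s : ℝ := ℓ / Real.sqrt d with hs_def
  have hs : 0 < s := div_pos hℓ hsq
  -- the scaled coordinates
  set F : EuclideanSpace ℝ (Fin d) → ℕ → ℝ :=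
    fun x n => if h : n < d then x ⟨n, h⟩ / s else 0 with hF_def
  set φ : EuclideanSpace ℝ (Fin d) → EuclideanSpace ℝ (Fin d) :=
    fun x => (WithLp.equiv 2 (Fin d → ℝ)).symm (fun i => ((kk d (F x) i : ℤ) : ℝ)) with hφ_def
  have hφ_apply : ∀ x (i : Fin d), φ x i = ((kk d (F x) i : ℤ) : ℝ) := by
    intro x i
    rw [hφ_def]
    rfl
  have hφ_kk : ∀ x y, φ x = φ y → ∀ m, m < d → kk d (F x) m = kk d (F y) m := by
    intro x y hxy m hm
    have := congrArg (fun v => v ⟨m, hm⟩) hxy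
    simp only [hφ_apply] at this
    exact_mod_cast this
  -- rpow identity
  have hrpow : (d:ℝ) ^ ((3:ℝ)/2) = d * Real.sqrt d := by
    have : ((3:ℝ)/2) = 1 + 1/2 := by norm_num
    rw [this, Real.rpow_add hd0, Real.rpow_one, ← Real.sqrt_eq_rpow]
  refine ⟨φ, ?_, ?_⟩
  · -- fiber diameter
    rintro z ⟨x0, rfl⟩
    apply EMetric.diam_le
    intro x hx y hy
    simp only [Set.mem_preimage, Set.mem_singleton_iff] at hx hy
    have hxy : φ x = φ y := hx.trans hy.symm
    have hkk := hφ_kk x y hxy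
    have hcoord : ∀ i : Fin d, |x i - y i| ≤ s := by
      intro i
      have hSg : Sg d (F x) i = Sg d (F y) i :=
        Sg_eq_of_prefix i (fun m hm => hkk m (hm.trans i.2))
      have hfl : ⌊F x i + (Sg d (F x) i : ℝ)/(d+1)⌋ = ⌊F y i + (Sg d (F x) i : ℝ)/(d+1)⌋ := by
        have h := hkk i i.2
        rw [kk_def, kk_def] at h
        rw [hSg] at h
        rw [hSg]
        exact h
      have h1 : |F x i - F y i| < 1 := by
        have := abs_lt_one_of_floor_eq hfl
        simpa using this
      have hFx : F x i = x i / s := by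
        rw [hF_def]; simp [i.2]
      have hFy : F y i = y i / s := by
        rw [hF_def]; simp [i.2]
      rw [hFx, hFy, div_sub_div_same, abs_div, abs_of_pos hs, div_lt_one hs] at h1
      exact h1.le
    have hdist : dist x y ≤ ℓ := by
      rw [EuclideanSpace.dist_eq]
      have hsum : ∑ i : Fin d, dist (x i) (y i) ^ 2 ≤ d * s ^ 2 := by
        calc ∑ i : Fin d, dist (x i) (y i) ^ 2 ≤ ∑ _i : Fin d, s ^ 2 := by
              apply Finset.sum_le_sum
              intro i _
              have := hcoord i
              rw [Real.dist_eq]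
              nlinarith [abs_nonneg (x i - y i)]
          _ = d * s ^ 2 := by simp [mul_comm]
      calc Real.sqrt (∑ i : Fin d, dist (x i) (y i) ^ 2) ≤ Real.sqrt (d * s ^ 2) :=
            Real.sqrt_le_sqrt hsum
        _ = Real.sqrt d * s := by
            rw [Real.sqrt_mul hd0.le, Real.sqrt_sq hs.le]
        _ = ℓ := by
            rw [hs_def]; field_simp
    rw [edist_dist]
    exact ENNReal.ofReal_le_ofReal hdist
  · -- counting
    intro S hS
    rcases Set.eq_empty_or_nonempty S with rfl | ⟨x0, hx0⟩
    · simp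
    set ρ : ℝ := ℓ / (8 * (d:ℝ) ^ ((3:ℝ)/2)) with hρ_def
    have hρpos : 0 < ρ := by
      apply div_pos hℓ
      rw [hrpow]; positivity
    have hdist : ∀ x ∈ S, ∀ y ∈ S, dist x y ≤ ρ := by
      intro x hx y hy
      have h1 : edist x y ≤ ENNReal.ofReal ρ :=
        le_trans (EMetric.edist_le_diam_of_mem hx hy) hS
      rw [edist_dist] at h1
      exact (ENNReal.ofReal_le_ofReal_iff hρpos.le).mp h1
    set η : ℝ := ρ / s with hη_def
    have hη_eq : η = 1 / (8 * d) := by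
      rw [hη_def, hρ_def, hs_def, hrpow]
      rw [div_div_div_eq]
      field_simp
    have hη0 : 0 ≤ η := by rw [hη_eq]; positivity
    have hηlt : η < 1/((d:ℝ)+1) := by
      rw [hη_eq]
      have h8 : (d:ℝ) + 1 < 8 * d := by
        have h1 : (1:ℝ) ≤ d := by exact_mod_cast hd
        linarith
      exact one_div_lt_one_div_of_lt (by positivity) h8
    have hcoord_le : ∀ (x y : EuclideanSpace ℝ (Fin d)) (i : Fin d),
        dist (x i) (y i) ≤ dist x y := by
      intro x y i
      rw [EuclideanSpace.dist_eq]
      have h1 : dist (x i) (y i)^2 ≤ ∑ j : Fin d, dist (x j) (y j)^2 :=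
        Finset.single_le_sum (f := fun j => dist (x j) (y j)^2)
          (fun j _ => sq_nonneg _) (Finset.mem_univ i)
      calc dist (x i) (y i) = Real.sqrt (dist (x i) (y i)^2) :=
            (Real.sqrt_sq dist_nonneg).symm
        _ ≤ _ := Real.sqrt_le_sqrt h1
    have hFcoord : ∀ x ∈ S, ∀ y ∈ S, ∀ n : ℕ, |F x n - F y n| ≤ η := by
      intro x hx y hy n
      by_cases h : n < d
      · have hFx : F x n = x ⟨n, h⟩ / s := by rw [hF_def]; simp [h]
        have hFy : F y n = y ⟨n, h⟩ / s := by rw [hF_def]; simp [h]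
        rw [hFx, hFy, div_sub_div_same, abs_div, abs_of_pos hs, hη_def]
        gcongr
        calc |x ⟨n, h⟩ - y ⟨n, h⟩| = dist (x ⟨n, h⟩) (y ⟨n, h⟩) := (Real.dist_eq _ _).symm
          _ ≤ dist x y := hcoord_le x y ⟨n, h⟩
          _ ≤ ρ := hdist x hx y hy
      · have hFx : F x n = 0 := by rw [hF_def]; simp [h]
        have hFy : F y n = 0 := by rw [hF_def]; simp [h]
        rw [hFx, hFy, sub_zero, abs_zero]
        exact hη0
    have hkey : ∀ x ∈ S, ∀ y ∈ S,
        ((∀ m, m < d → kk d (F x) m = kk d (F y) m) ∧ Sg d (F x) d = Sg d (F y) d) ∨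
        (1 ≤ |Sg d (F x) d - Sg d (F y) d| ∧ |Sg d (F x) d - Sg d (F y) d| ≤ (d:ℤ)) := by
      intro x hx y hy
      exact key hηlt (hFcoord x hx y hy) d le_rfl
    set g : EuclideanSpace ℝ (Fin d) → ℤ := fun v => ∑ i : Fin d, ⌊v i⌋ with hg_def
    have hgφ : ∀ x, g (φ x) = Sg d (F x) d := by
      intro x
      rw [hg_def]
      simp only [hφ_apply, Int.floor_intCast]
      rw [Sg_eq_sum, Finset.sum_range]
    have hinj : Set.InjOn g (φ '' S) := by
      rintro a ⟨x, hx, rfl⟩ b ⟨y, hy, rfl⟩ hg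
      rw [hgφ, hgφ] at hg
      rcases hkey x hx y hy with ⟨hpre, _⟩ | ⟨h1, _⟩
      · have hfun : (fun i : Fin d => ((kk d (F x) i : ℤ):ℝ))
            = (fun i : Fin d => ((kk d (F y) i : ℤ):ℝ)) := by
          funext i
          exact_mod_cast hpre i i.2
        rw [hφ_def]
        simp only [hfun]
      · exfalso
        rw [hg, sub_self, abs_zero] at h1
        omega
    have hAboundpair : ∀ x ∈ S, ∀ y ∈ S, |Sg d (F x) d - Sg d (F y) d| ≤ (d:ℤ) := by
      intro x hx y hy
      rcases hkey x hx y hy with ⟨_, heq⟩ | ⟨_, h2⟩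
      · rw [heq, sub_self, abs_zero]
        exact_mod_cast Nat.zero_le d
      · exact h2
    set A : Set ℤ := g '' (φ '' S) with hA_def
    have hAne : A.Nonempty :=
      ⟨g (φ x0), Set.mem_image_of_mem _ (Set.mem_image_of_mem _ hx0)⟩
    have hAfin : A.Finite := by
      apply Set.Finite.subset (Set.finite_Icc (g (φ x0) - d) (g (φ x0) + d))
      rintro a ⟨b, ⟨x, hx, rfl⟩, rfl⟩
      have hb := hAboundpair x hx x0 hx0
      rw [abs_le] at hb
      rw [Set.mem_Icc, hgφ, hgφ]
      omega
    obtain ⟨a0, ha0, hmin⟩ := Set.exists_min_image A id hAfin hAne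
    have hsub : A ⊆ Set.Icc a0 (a0 + d) := by
      intro a ha
      refine ⟨hmin a ha, ?_⟩
      obtain ⟨b, ⟨x, hx, rfl⟩, rfl⟩ := ha
      obtain ⟨b0, ⟨y, hy, rfl⟩, rfl⟩ := ha0
      have hb := hAboundpair x hx y hy
      rw [abs_le] at hb
      have hmm := hmin (g (φ x)) (Set.mem_image_of_mem _ (Set.mem_image_of_mem _ hx))
      simp only [id] at hmm ⊢
      rw [hgφ, hgφ] at *
      omega
    have hcard : A.ncard ≤ d + 1 := by
      have h1 : A.ncard ≤ (Set.Icc a0 (a0 + (d:ℤ))).ncard :=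
        Set.ncard_le_ncard hsub (Set.finite_Icc _ _)
      rw [← Finset.coe_Icc, Set.ncard_coe_finset, Int.card_Icc] at h1
      omega
    have hfin : (φ '' S).Finite := Set.Finite.of_finite_image hAfin hinj
    refine ⟨hfin, ?_⟩
    have hnc := Set.ncard_image_of_injOn hinj
    rw [← hA_def] at hnc
    omega
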